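/- For every λ ∈ ℂ with λ ≠ 0, writing a := √2·|λ|, the matrix exponential of −i·O′ has the closed form exp(−i·O′) = I − i·(sin(a)/a)·O′ + ((cos(a) − 1)/(2|λ|²))·O′², where I is the 3×3 identity. -/

import Mathlib

noncomputable section
open Matrix

/-- The interaction block `O′` associated with the coupling constant `λ`. -/
def Oprime (l : ℂ) : Matrix (Fin 3) (Fin 3) ℂ :=
  !![0, 0, -(starRingEnd ℂ) l;
     0, 0, -(starRingEnd ℂ) l;
     -l, -l, 0]

/-- For `λ ≠ 0` and `a := √2·|λ|`, the one-step interaction unitary has the closed form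
`exp(−i·O′) = I − i·(sin a / a)·O′ + ((cos a − 1)/(2|λ|²))·O′²`. -/
theorem exp_interaction_closed_form (l : ℂ) (hl : l ≠ 0) :
    let a : ℝ := Real.sqrt 2 * ‖l‖
    NormedSpace.exp ((-Complex.I) • Oprime l) =
      1 - (Complex.I * ((Real.sin a / a : ℝ) : ℂ)) • Oprime l
        + (((Real.cos a - 1) / (2 * ‖l‖ ^ 2) : ℝ) : ℂ) • (Oprime l ^ 2) := by
  intro a
  letI : SeminormedRing (Matrix (Fin 3) (Fin 3) ℂ) := Matrix.linftyOpSemiNormedRing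
  letI : NormedRing (Matrix (Fin 3) (Fin 3) ℂ) := Matrix.linftyOpNormedRing
  letI : NormedAlgebra ℂ (Matrix (Fin 3) (Fin 3) ℂ) := Matrix.linftyOpNormedAlgebra
  set M : Matrix (Fin 3) (Fin 3) ℂ := (-Complex.I) • Oprime l with hM
  set z : ℂ := (a : ℂ) with hz
  have habs : ‖l‖ ≠ 0 := norm_ne_zero_iff.mpr hl
  have ha : a ≠ 0 := by
    simp only [a]
    positivity
  have hzne : z ≠ 0 := by
    simpa [hz] using ha
  have hz2 : z ^ 2 = 2 * (l * (starRingEnd ℂ) l) := by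
    rw [hz, ← Complex.ofReal_pow]
    simp only [a]
    rw [mul_pow, Real.sq_sqrt (by norm_num : (0:ℝ) ≤ 2)]
    rw [Complex.sq_norm]
    push_cast
    rw [Complex.mul_conj]
  have hO3 : Oprime l ^ 3 = (2 * (l * (starRingEnd ℂ) l)) • Oprime l := by
    ext i j
    fin_cases i <;> fin_cases j <;>
      simp [Oprime, pow_succ, Matrix.mul_apply, Fin.sum_univ_three] <;> ring_nf <;> tauto
  have hM2 : M ^ 2 = (-1 : ℂ) • Oprime l ^ 2 := by
    rw [hM, smul_pow]
    norm_num [Complex.I_sq]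
  have hM3 : M ^ 3 = (-z ^ 2) • M := by
    rw [hM, smul_pow, hO3, hz2, smul_comm, smul_smul, smul_smul]
    congr 1
    simp [pow_succ, Complex.I_sq]
  have hodd : ∀ n : ℕ, M ^ (2 * n + 1) = ((-z ^ 2) ^ n) • M := by
    intro n
    induction n with
    | zero => simp
    | succ n ih =>
      have h : 2 * (n + 1) + 1 = (2 * n + 1) + 2 := by ring
      rw [h, pow_add, ih, smul_mul_assoc, ← pow_succ', show (2+1 : ℕ) = 3 from rfl,
        hM3, smul_smul, ← pow_succ]
  have heven : ∀ n : ℕ, M ^ (2 * n + 2) = ((-z ^ 2) ^ n) • M ^ 2 := by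
    intro n
    have h : 2 * n + 2 = (2 * n + 1) + 1 := by ring
    rw [h, pow_succ, hodd n, smul_mul_assoc, ← pow_two]
  -- the exponential series
  set f : ℕ → Matrix (Fin 3) (Fin 3) ℂ := fun n => ((n.factorial : ℂ)⁻¹) • M ^ n with hf
  have hs : HasSum (fun n : ℕ => f (2 * n + 1)) ((Complex.sin z / z) • M) := by
    have h1 := (Complex.hasSum_sin z).div_const z
    have h2 := h1.smul_const M
    convert h2 using 2 with n
    rw [hf]
    simp only [hodd n]
    rw [smul_smul]
    congr 1
    have hfac : ((2 * n + 1).factorial : ℂ) ≠ 0 := by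
      exact_mod_cast Nat.cast_ne_zero.mpr (2 * n + 1).factorial_ne_zero
    field_simp
    rw [pow_succ]
    ring_nf
  have hc1 := (hasSum_nat_add_iff'
      (f := fun n : ℕ => (-1 : ℂ) ^ n * z ^ (2 * n) / ((2 * n).factorial : ℂ)) 1).mpr
      (Complex.hasSum_cos z)
  simp only [Finset.range_one, Finset.sum_singleton, Nat.mul_zero, pow_zero, Nat.factorial_zero,
    Nat.cast_one, div_one, one_mul] at hc1
  have hc2 := (hc1.div_const (-z ^ 2)).smul_const (M ^ 2)
  have hevenshift : HasSum (fun n : ℕ => f (2 * (n + 1)))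
      (((Complex.cos z - 1) / (-z ^ 2)) • M ^ 2) := by
    convert hc2 using 2 with n
    rw [hf]
    simp only [show 2 * (n + 1) = 2 * n + 2 by ring, heven n]
    rw [smul_smul]
    congr 1
    have hfac : (((2 * n + 2).factorial : ℂ)) ≠ 0 := by
      exact_mod_cast Nat.cast_ne_zero.mpr (2 * n + 2).factorial_ne_zero
    have hz2ne : (-z ^ 2 : ℂ) ≠ 0 := by simpa using hzne
    rw [neg_pow (z ^ 2), ← pow_mul]
    field_simp
    ring
  have heven_sum : HasSum (fun n : ℕ => f (2 * n))
      ((((Complex.cos z - 1) / (-z ^ 2)) • M ^ 2) + 1) := by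
    have h := (hasSum_nat_add_iff (f := fun n : ℕ => f (2 * n)) 1).mp hevenshift
    simpa [hf] using h
  have total := heven_sum.even_add_odd hs
  rw [NormedSpace.exp_eq_tsum (𝕂 := ℂ)]
  show (∑' n : ℕ, f n) = _
  rw [total.tsum_eq]
  have e2 : ((Complex.cos z - 1) / (-z ^ 2)) * (-1) =
      (((Real.cos a - 1) / (2 * ‖l‖ ^ 2) : ℝ) : ℂ) := by
    have hz2' : (((2 : ℝ) * ‖l‖ ^ 2 : ℝ) : ℂ) = z ^ 2 := by
      rw [hz, ← Complex.ofReal_pow]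
      norm_cast
      rw [mul_pow, Real.sq_sqrt (by norm_num : (0:ℝ) ≤ 2)]
    push_cast [Complex.ofReal_cos] at hz2' ⊢
    rw [← hz2']
    field_simp
    ring
  have e3 : (Complex.sin z / z) * (-Complex.I) =
      -(Complex.I * ((Real.sin a / a : ℝ) : ℂ)) := by
    push_cast [Complex.ofReal_sin]
    ring
  rw [hM2, smul_smul, e2]
  rw [hM, smul_smul, e3]
  rw [neg_smul, sub_eq_add_neg]
  abel
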